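/- Let g(x) = τ + a + b·(x − c)·exp(−x/A) with τ = 1.3, a = 0.26, b = 13.0, c = 0.02, A = 0.18, and define h(v) = v + g(τ + v − g(τ − v)) − g(τ − v). Then h is not monotone on the interval of physically relevant v (there exist v₁ < v₂ in (0.4, 1.2) with h(v₁) > h(v₂)), i.e., the 1D pulse-width map has a fold, a necessary condition for chaotic dynamics. -/

import Mathlib

set_option maxHeartbeats 2000000


/-- The degradation function used in the paper's chaotic copier. -/
noncomputable def gdeg (x : ℝ) : ℝ :=
  1.3 + 0.26 + 13.0 * (x - 0.02) * Real.exp (-x / 0.18)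

/-- The induced 1D pulse-width map. -/
noncomputable def hmap (v : ℝ) : ℝ :=
  v + gdeg (1.3 + v - gdeg (1.3 - v)) - gdeg (1.3 - v)

lemma exp_neg_lb (x : ℝ) (n : ℕ) (h0 : 0 ≤ x) (h1 : x ≤ n) (hn : 0 < n) :
    (1 - x / n)^n ≤ Real.exp (-x) := by
  have hnR : (0:ℝ) < n := by exact_mod_cast hn
  have hbase : (0:ℝ) ≤ 1 - x / n := by
    have : x / n ≤ 1 := (div_le_one hnR).mpr h1
    linarith
  have key : 1 - x / n ≤ Real.exp (-(x / n)) := by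
    have := Real.add_one_le_exp (-(x / n)); linarith
  calc (1 - x / n)^n ≤ (Real.exp (-(x / n)))^n := pow_le_pow_left₀ hbase key n
    _ = Real.exp (-x) := by
        rw [← Real.exp_nat_mul]
        congr 1
        field_simp

lemma exp_neg_ub (x : ℝ) (n : ℕ) (h0 : 0 ≤ x) (hn : 0 < n) :
    Real.exp (-x) ≤ ((1 + x / n)⁻¹)^n := by
  have hnR : (0:ℝ) < n := by exact_mod_cast hn
  have hdiv : 0 ≤ x / n := div_nonneg h0 hnR.le
  have hpos : (0:ℝ) < 1 + x / n := by linarith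
  have key : Real.exp (-(x / n)) ≤ (1 + x / n)⁻¹ := by
    rw [Real.exp_neg]
    have h1 : 1 + x / n ≤ Real.exp (x / n) := by
      have := Real.add_one_le_exp (x / n); linarith
    exact inv_anti₀ hpos h1
  calc Real.exp (-x) = (Real.exp (-(x / n)))^n := by
        rw [← Real.exp_nat_mul]
        congr 1
        field_simp
    _ ≤ ((1 + x / n)⁻¹)^n := pow_le_pow_left₀ (Real.exp_pos _).le key n

lemma e1_lb : (0.0341 : ℝ) ≤ Real.exp (-(10/3)) := by
  have h := exp_neg_lb (10/3) 128 (by norm_num) (by norm_num) (by norm_num)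
  refine le_trans ?_ h
  norm_num

lemma e1_ub : Real.exp (-(10/3)) ≤ (0.03723 : ℝ) := by
  have h := exp_neg_ub (10/3) 128 (by norm_num) (by norm_num)
  refine le_trans h ?_
  norm_num

lemma e2_lb : (0.1868 : ℝ) ≤ Real.exp (-(5/3)) := by
  have h := exp_neg_lb (5/3) 128 (by norm_num) (by norm_num) (by norm_num)
  refine le_trans ?_ h
  norm_num

lemma e2_ub : Real.exp (-(5/3)) ≤ (0.191 : ℝ) := by
  have h := exp_neg_ub (5/3) 128 (by norm_num) (by norm_num)
  refine le_trans h ?_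
  norm_num

lemma e3_lb : (0.360 : ℝ) ≤ Real.exp (-(1829/1800)) := by
  have h := exp_neg_lb (1829/1800) 128 (by norm_num) (by norm_num) (by norm_num)
  refine le_trans ?_ h
  norm_num

lemma e4_ub : Real.exp (-(447/1800)) ≤ (0.7803 : ℝ) := by
  have h := exp_neg_ub (447/1800) 128 (by norm_num) (by norm_num)
  refine le_trans h ?_
  norm_num

/-- The 1D pulse-width map `h` of the chaotic copier is not monotone on the
physically relevant interval: it has a fold. -/
theorem stmt_16 :
    ∃ v₁ v₂ : ℝ, 0.4 < v₁ ∧ v₁ < v₂ ∧ v₂ < 1.2 ∧ hmap v₁ > hmap v₂ := by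
  refine ⟨0.7, 1.0, by norm_num, by norm_num, by norm_num, ?_⟩
  have he1lb := e1_lb
  have he1ub := e1_ub
  have he2lb := e2_lb
  have he2ub := e2_ub
  -- g(1.3 - 0.7) = g(0.6)
  have h6 : gdeg (1.3 - 0.7) = 1.56 + 7.54 * Real.exp (-(10/3)) := by
    unfold gdeg
    have harg : (-(1.3 - 0.7) / 0.18 : ℝ) = -(10/3) := by norm_num
    rw [harg]; norm_num
  -- g(1.3 - 1.0) = g(0.3)
  have h3 : gdeg (1.3 - 1.0) = 1.56 + 3.64 * Real.exp (-(5/3)) := by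
    unfold gdeg
    have harg : (-(1.3 - 1.0) / 0.18 : ℝ) = -(5/3) := by norm_num
    rw [harg]; norm_num
  set w₁ : ℝ := 1.3 + 0.7 - gdeg (1.3 - 0.7) with hw₁
  set w₂ : ℝ := 1.3 + 1.0 - gdeg (1.3 - 1.0) with hw₂
  clear_value w₁ w₂
  have hw₁eq : w₁ = 0.44 - 7.54 * Real.exp (-(10/3)) := by rw [hw₁, h6]; ring
  have hw₂eq : w₂ = 0.74 - 3.64 * Real.exp (-(5/3)) := by rw [hw₂, h3]; linarith
  have hw₁lb : (0.159 : ℝ) ≤ w₁ := by rw [hw₁eq]; nlinarith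
  have hw₁ub : w₁ ≤ (0.1829 : ℝ) := by rw [hw₁eq]; nlinarith
  have hw₂lb : (0.0447 : ℝ) ≤ w₂ := by rw [hw₂eq]; nlinarith
  have hw₂ub : w₂ ≤ (0.0601 : ℝ) := by rw [hw₂eq]; nlinarith
  -- bound exp(-w₁/0.18) from below
  have hE3 : Real.exp (-(1829/1800)) ≤ Real.exp (-w₁ / 0.18) := by
    apply Real.exp_le_exp.mpr
    rw [le_div_iff₀ (by norm_num : (0:ℝ) < 0.18)]
    linarith
  have hE3' : (0.360 : ℝ) ≤ Real.exp (-w₁ / 0.18) := le_trans e3_lb hE3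
  -- bound exp(-w₂/0.18) from above
  have hE4 : Real.exp (-w₂ / 0.18) ≤ Real.exp (-(447/1800)) := by
    apply Real.exp_le_exp.mpr
    rw [div_le_iff₀ (by norm_num : (0:ℝ) < 0.18)]
    linarith
  have hE4' : Real.exp (-w₂ / 0.18) ≤ (0.7803 : ℝ) := le_trans hE4 e4_ub
  have hE4pos : (0 : ℝ) < Real.exp (-w₂ / 0.18) := Real.exp_pos _
  -- bound gdeg w₁ from below
  have hgw₁ : (2.21052 : ℝ) ≤ gdeg w₁ := by
    unfold gdeg
    have hp : (0.139 : ℝ) * 0.360 ≤ (w₁ - 0.02) * Real.exp (-w₁ / 0.18) :=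
      mul_le_mul (by linarith) hE3' (by norm_num) (by linarith)
    nlinarith [hp]
  -- bound gdeg w₂ from above
  have hgw₂ : gdeg w₂ ≤ (1.96677 : ℝ) := by
    unfold gdeg
    have hq : (w₂ - 0.02) * Real.exp (-w₂ / 0.18) ≤ (0.0401 : ℝ) * 0.7803 :=
      mul_le_mul (by linarith) hE4' hE4pos.le (by norm_num)
    nlinarith [hq]
  -- conclude
  show hmap 0.7 > hmap 1.0
  unfold hmap
  rw [← hw₁, ← hw₂] at *
  rw [h6, h3]
  nlinarith
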